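/- Let α_t, ᾱ_t, ᾱ_{t−1} ∈ (0,1) with ᾱ_t = α_t ᾱ_{t−1}, and let ε^u, ε^c ∈ ℝ^d, w ∈ ℝ. Define ε^w = ε^u + w(ε^c − ε^u). Then the DDIM update with noise ε^w applied to x_t equals the DDIM update with noise ε^u applied to the calibrated point x̂_t = x_t − w(√(1−ᾱ_t) − √(α_t − ᾱ_t))(ε^c − ε^u). That is, (√ᾱ_{t−1}/√ᾱ_t)·x_t + (√(1−ᾱ_{t−1}) − √(1−ᾱ_t)/√α_t)·ε^w = (√ᾱ_{t−1}/√ᾱ_t)·x̂_t + (√(1−ᾱ_{t−1}) − √(1−ᾱ_t)/√α_t)·ε^u. -/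
import Mathlib

theorem stmt_8 {d : ℕ} (αt abt ab1 w : ℝ)
    (hαt : αt ∈ Set.Ioo (0:ℝ) 1) (habt : abt ∈ Set.Ioo (0:ℝ) 1)
    (hab1 : ab1 ∈ Set.Ioo (0:ℝ) 1) (h : abt = αt * ab1)
    (x εu εc : EuclideanSpace ℝ (Fin d)) :
    (Real.sqrt ab1 / Real.sqrt abt) • x
        + (Real.sqrt (1 - ab1) - Real.sqrt (1 - abt) / Real.sqrt αt) •
            (εu + w • (εc - εu)) =
      (Real.sqrt ab1 / Real.sqrt abt) •
          (x - (w * (Real.sqrt (1 - abt) - Real.sqrt (αt - abt))) • (εc - εu))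
        + (Real.sqrt (1 - ab1) - Real.sqrt (1 - abt) / Real.sqrt αt) • εu := by
  have hα0 : 0 < αt := hαt.1
  have hab10 : 0 < ab1 := hab1.1
  have hsα : Real.sqrt αt ≠ 0 := by positivity
  have h1 : Real.sqrt abt = Real.sqrt αt * Real.sqrt ab1 := by
    rw [h, Real.sqrt_mul hα0.le]
  have h2 : Real.sqrt (αt - abt) = Real.sqrt αt * Real.sqrt (1 - ab1) := by
    rw [h, show αt - αt * ab1 = αt * (1 - ab1) by ring, Real.sqrt_mul hα0.le]
  have key : (Real.sqrt (1 - ab1) - Real.sqrt (1 - abt) / Real.sqrt αt) * w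
      = (Real.sqrt ab1 / Real.sqrt abt) * (-(w * (Real.sqrt (1 - abt) - Real.sqrt (αt - abt)))) := by
    rw [h1, h2]
    have hsab1 : Real.sqrt ab1 ≠ 0 := by positivity
    field_simp
    ring
  calc (Real.sqrt ab1 / Real.sqrt abt) • x
        + (Real.sqrt (1 - ab1) - Real.sqrt (1 - abt) / Real.sqrt αt) •
            (εu + w • (εc - εu))
      = (Real.sqrt ab1 / Real.sqrt abt) • x
        + ((Real.sqrt (1 - ab1) - Real.sqrt (1 - abt) / Real.sqrt αt) * w) • (εc - εu)
        + (Real.sqrt (1 - ab1) - Real.sqrt (1 - abt) / Real.sqrt αt) • εu := by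
        rw [mul_smul]; module
    _ = _ := by rw [key, mul_smul]; module
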